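/- arXiv:1209.6504 — 4 statements merged into one kernel-verified Lean document; each statement's English description precedes it below -/
import Mathlib

section
/- Let P be a skew product on I×I with (C,ρ)-contracting fibers, and let μ̃ be a Borel probability measure on I×I. If (x,y₁) belongs to the basin of μ̃ (for the discrete-time system generated by P), then (x,y₂) belongs to the basin of μ̃ for every y₂ ∈ I; that is, the basin of μ̃ is a union of vertical fibers {x}×I. -/
open MeasureTheory Set Filter Topology

noncomputable section

/-- The interval `I = [-1/2, 1/2] ⊆ ℝ`. -/
abbrev Iv : Set ℝ := Set.Icc (-(1 / 2)) (1 / 2)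

instance : Nonempty Iv := ⟨⟨0, by norm_num⟩⟩

/-- The square `Σ = I × I`. -/
abbrev Sq : Type := Iv × Iv

/-- The basin of a Borel probability measure `μ` for the discrete-time system generated by
`T`: the set of points whose Birkhoff averages of every continuous observable converge to the
space average. -/
def basin (T : Sq → Sq) (μ : Measure Sq) : Set Sq :=
  {ξ | ∀ φ : Sq → ℝ, Continuous φ →
    Tendsto (fun n : ℕ => (1 / (n : ℝ)) * ∑ j ∈ Finset.range n, φ (T^[j] ξ))
      atTop (nhds (∫ p, φ p ∂μ))}

/-- The basin of any Borel probability measure for a skew product with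
`(C,ρ)`-contracting fibers is a union of vertical fibers `{x} × I`. -/
theorem basin_union_of_fibers
    (C ρ : ℝ) (hC : 0 < C) (hρ₀ : 0 < ρ) (hρ₁ : ρ < 1)
    (P : Sq → Sq) (hPmeas : Measurable P)
    (f : Iv → Iv) (g : Sq → Iv) (hfmeas : Measurable f) (hgmeas : Measurable g)
    (hskew : ∀ p : Sq, P p = (f p.1, g p))
    (hcontr : ∀ (x y₁ y₂ : Iv) (m : ℕ), 1 ≤ m →
      dist (P^[m] (x, y₁)) (P^[m] (x, y₂)) ≤ C * ρ ^ m)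
    (μ : Measure Sq) [IsProbabilityMeasure μ]
    (x y₁ : Iv) (h : (x, y₁) ∈ basin P μ) :
    ∀ y₂ : Iv, (x, y₂) ∈ basin P μ := by
  intro y₂ φ hφ
  have hb := h φ hφ
  have hucont : UniformContinuous φ := CompactSpace.uniformContinuous_of_continuous hφ
  have hd : Tendsto (fun j : ℕ => φ (P^[j] (x, y₂)) - φ (P^[j] (x, y₁))) atTop (nhds 0) := by
    rw [Metric.tendsto_nhds]
    intro ε hε
    obtain ⟨δ, hδ, hδ'⟩ := Metric.uniformContinuous_iff.mp hucont ε hε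
    have hρt : Tendsto (fun m : ℕ => C * ρ ^ m) atTop (nhds 0) := by
      simpa using (tendsto_pow_atTop_nhds_zero_of_lt_one hρ₀.le hρ₁).const_mul C
    filter_upwards [hρt.eventually (gt_mem_nhds hδ), eventually_ge_atTop 1] with j hjδ hj1
    have hdist : dist (P^[j] (x, y₂)) (P^[j] (x, y₁)) < δ :=
      lt_of_le_of_lt (hcontr x y₂ y₁ j hj1) hjδ
    have := hδ' hdist
    simpa [Real.dist_eq] using this
  have hces : Tendsto (fun n : ℕ => (1 / (n : ℝ)) *
      ∑ j ∈ Finset.range n, (φ (P^[j] (x, y₂)) - φ (P^[j] (x, y₁)))) atTop (nhds 0) := by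
    simpa [one_div] using hd.cesaro
  have hsum : ∀ n : ℕ, (1 / (n : ℝ)) * ∑ j ∈ Finset.range n, φ (P^[j] (x, y₂)) =
      (1 / (n : ℝ)) * ∑ j ∈ Finset.range n, φ (P^[j] (x, y₁)) +
      (1 / (n : ℝ)) * ∑ j ∈ Finset.range n,
        (φ (P^[j] (x, y₂)) - φ (P^[j] (x, y₁))) := by
    intro n
    rw [← mul_add, ← Finset.sum_add_distrib]
    congr 1
    apply Finset.sum_congr rfl
    intro j _
    ring
  have hfin := hb.add hces
  rw [add_zero] at hfin
  exact hfin.congr fun n => (hsum n).symm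
end
end

section
/- Let P be a skew product on I×I over a Borel map f : I → I, with (C,ρ)-contracting fibers, and let μ̄ be an f-invariant Borel probability measure on I. Let φ : I×I → ℝ be continuous, and assume that for each m ≥ 0 the functions (φ∘P^m)⁺ and (φ∘P^m)⁻ are Borel measurable. Then the two limits lim_{m→∞} ∫ (φ∘P^m)⁺ dμ̄ and lim_{m→∞} ∫ (φ∘P^m)⁻ dμ̄ both exist and are equal. -/
open MeasureTheory Set Filter Topology

noncomputable section

/-- For a skew product `P` over `f` with `(C,ρ)`-contracting fibers, an
`f`-invariant Borel probability measure `μ̄` on `I` and a continuous `φ : I×I → ℝ`, the limits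
`lim_m ∫ (φ∘P^m)⁺ dμ̄` and `lim_m ∫ (φ∘P^m)⁻ dμ̄` both exist and coincide. -/
theorem lift_limits_exist_and_agree
    (C ρ : ℝ) (hC : 0 < C) (hρ₀ : 0 < ρ) (hρ₁ : ρ < 1)
    (f : Iv → Iv) (hfmeas : Measurable f) (g : Sq → Iv) (hgmeas : Measurable g)
    (P : Sq → Sq) (hPmeas : Measurable P) (hskew : ∀ p : Sq, P p = (f p.1, g p))
    (hcontr : ∀ (x y₁ y₂ : Iv) (m : ℕ), 1 ≤ m →
      dist (P^[m] (x, y₁)) (P^[m] (x, y₂)) ≤ C * ρ ^ m)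
    (μ : Measure Iv) [IsProbabilityMeasure μ] (hinv : Measure.map f μ = μ)
    (φ : Sq → ℝ) (hφ : Continuous φ)
    (hmsup : ∀ m : ℕ, Measurable fun x : Iv => ⨆ y : Iv, φ (P^[m] (x, y)))
    (hminf : ∀ m : ℕ, Measurable fun x : Iv => ⨅ y : Iv, φ (P^[m] (x, y))) :
    ∃ L : ℝ,
      Tendsto (fun m : ℕ => ∫ x, (⨆ y : Iv, φ (P^[m] (x, y))) ∂μ) atTop (nhds L) ∧
      Tendsto (fun m : ℕ => ∫ x, (⨅ y : Iv, φ (P^[m] (x, y))) ∂μ) atTop (nhds L) := by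
  have hcpt : CompactSpace Iv := isCompact_iff_compactSpace.mp isCompact_Icc
  -- bound on φ
  obtain ⟨M, hM⟩ : ∃ M, ∀ p : Sq, ‖φ p‖ ≤ M := by
    obtain ⟨M, hM⟩ := isCompact_univ.exists_bound_of_continuousOn hφ.continuousOn
    exact ⟨M, fun p => hM p (mem_univ p)⟩
  have hMnn : 0 ≤ M := le_trans (norm_nonneg _) (hM Classical.ofNonempty)
  set S : ℕ → Iv → ℝ := fun m x => ⨆ y : Iv, φ (P^[m] (x, y)) with hSdef
  set T : ℕ → Iv → ℝ := fun m x => ⨅ y : Iv, φ (P^[m] (x, y)) with hTdef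
  have hbddA : ∀ m (x : Iv), BddAbove (Set.range fun y : Iv => φ (P^[m] (x, y))) := by
    rintro m x
    refine ⟨M, ?_⟩
    rintro _ ⟨y, rfl⟩
    exact le_trans (le_abs_self _) (hM _)
  have hbddB : ∀ m (x : Iv), BddBelow (Set.range fun y : Iv => φ (P^[m] (x, y))) := by
    rintro m x
    refine ⟨-M, ?_⟩
    rintro _ ⟨y, rfl⟩
    exact neg_le_of_abs_le (hM _)
  have hSbound : ∀ m x, ‖S m x‖ ≤ M := by
    intro m x
    rw [Real.norm_eq_abs, abs_le]
    constructor
    · exact le_trans (neg_le_of_abs_le (hM _)) (le_ciSup (hbddA m x) Classical.ofNonempty)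
    · exact ciSup_le fun y => le_trans (le_abs_self _) (hM _)
  have hTbound : ∀ m x, ‖T m x‖ ≤ M := by
    intro m x
    rw [Real.norm_eq_abs, abs_le]
    constructor
    · exact le_ciInf fun y => neg_le_of_abs_le (hM _)
    · exact le_trans (ciInf_le (hbddB m x) Classical.ofNonempty)
        (le_trans (le_abs_self _) (hM _))
  have hTS : ∀ m x, T m x ≤ S m x := fun m x =>
    le_trans (ciInf_le (hbddB m x) Classical.ofNonempty)
      (le_ciSup (hbddA m x) Classical.ofNonempty)
  -- integrability
  have hIntS : ∀ m, Integrable (S m) μ := fun m =>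
    (integrable_const M).mono' (hmsup m).aestronglyMeasurable
      (Filter.Eventually.of_forall (hSbound m))
  have hIntT : ∀ m, Integrable (T m) μ := fun m =>
    (integrable_const M).mono' (hminf m).aestronglyMeasurable
      (Filter.Eventually.of_forall (hTbound m))
  have hIntSf : ∀ m, Integrable (fun x => S m (f x)) μ := fun m =>
    (integrable_const M).mono' ((hmsup m).comp hfmeas).aestronglyMeasurable
      (Filter.Eventually.of_forall fun x => hSbound m (f x))
  have hIntTf : ∀ m, Integrable (fun x => T m (f x)) μ := fun m =>
    (integrable_const M).mono' ((hminf m).comp hfmeas).aestronglyMeasurable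
      (Filter.Eventually.of_forall fun x => hTbound m (f x))
  -- invariance of integrals
  have hinvS : ∀ m, ∫ x, S m (f x) ∂μ = ∫ x, S m x ∂μ := by
    intro m
    rw [← integral_map hfmeas.aemeasurable (hmsup m).aestronglyMeasurable, hinv]
  have hinvT : ∀ m, ∫ x, T m (f x) ∂μ = ∫ x, T m x ∂μ := by
    intro m
    rw [← integral_map hfmeas.aemeasurable (hminf m).aestronglyMeasurable, hinv]
  -- step
  have hiter : ∀ m (x y : Iv), P^[m + 1] (x, y) = P^[m] (f x, g (x, y)) := by
    intro m x y
    rw [Function.iterate_succ_apply, hskew]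
  have hstepS : ∀ m x, S (m + 1) x ≤ S m (f x) := by
    intro m x
    refine ciSup_le fun y => ?_
    rw [hiter]
    exact le_ciSup (hbddA m (f x)) (g (x, y))
  have hstepT : ∀ m x, T m (f x) ≤ T (m + 1) x := by
    intro m x
    refine le_ciInf fun y => ?_
    rw [hiter]
    exact ciInf_le (hbddB m (f x)) (g (x, y))
  set a : ℕ → ℝ := fun m => ∫ x, S m x ∂μ with hadef
  set b : ℕ → ℝ := fun m => ∫ x, T m x ∂μ with hbdef
  have haanti : Antitone a := by
    refine antitone_nat_of_succ_le fun m => ?_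
    calc a (m + 1) ≤ ∫ x, S m (f x) ∂μ :=
          integral_mono (hIntS (m + 1)) (hIntSf m) (hstepS m)
      _ = a m := hinvS m
  have hbmono : Monotone b := by
    refine monotone_nat_of_le_succ fun m => ?_
    calc b m = ∫ x, T m (f x) ∂μ := (hinvT m).symm
      _ ≤ b (m + 1) := integral_mono (hIntTf m) (hIntT (m + 1)) (hstepT m)
  have habd : ∀ m, ‖a m‖ ≤ M := by
    intro m
    calc ‖a m‖ ≤ M * (μ Set.univ).toReal :=
          norm_integral_le_of_norm_le_const (Filter.Eventually.of_forall (hSbound m))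
      _ = M := by simp
  have hbddbelow : BddBelow (Set.range a) := by
    refine ⟨-M, ?_⟩
    rintro _ ⟨m, rfl⟩
    exact neg_le_of_abs_le (habd m)
  -- existence of the limit of a
  set L : ℝ := ⨅ m, a m with hLdef
  have haL : Tendsto a atTop (nhds L) := tendsto_atTop_ciInf haanti hbddbelow
  -- a - b tends to 0
  have hab_nonneg : ∀ m, 0 ≤ a m - b m := fun m =>
    sub_nonneg.mpr (integral_mono (hIntT m) (hIntS m) (hTS m))
  have hdiff : Tendsto (fun m => a m - b m) atTop (nhds 0) := by
    rw [Metric.tendsto_atTop]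
    intro ε hε
    have hUC : UniformContinuous φ := CompactSpace.uniformContinuous_of_continuous hφ
    obtain ⟨δ, hδpos, hδ⟩ := Metric.uniformContinuous_iff.mp hUC (ε / 2) (by linarith)
    have hto0 : Tendsto (fun m : ℕ => C * ρ ^ m) atTop (nhds 0) := by
      have := tendsto_pow_atTop_nhds_zero_of_lt_one hρ₀.le hρ₁
      simpa using (this.const_mul C)
    obtain ⟨N₀, hN₀⟩ := (Metric.tendsto_atTop.mp hto0) δ hδpos
    refine ⟨max N₀ 1, fun m hm => ?_⟩
    have hm1 : 1 ≤ m := le_trans (le_max_right _ _) hm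
    have hmN : N₀ ≤ m := le_trans (le_max_left _ _) hm
    have hsmall : C * ρ ^ m < δ := by
      have := hN₀ m hmN
      rw [Real.dist_eq] at this
      have hnn : 0 ≤ C * ρ ^ m := mul_nonneg hC.le (pow_nonneg hρ₀.le m)
      rw [abs_of_nonneg (by linarith)] at this
      linarith
    -- pointwise: S m x ≤ T m x + ε/2
    have hpt : ∀ x, S m x ≤ T m x + ε / 2 := by
      intro x
      refine ciSup_le fun y₁ => ?_
      have h1 : φ (P^[m] (x, y₁)) - ε / 2 ≤ T m x := by
        refine le_ciInf fun y₂ => ?_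
        have hd : dist (P^[m] (x, y₁)) (P^[m] (x, y₂)) < δ :=
          lt_of_le_of_lt (hcontr x y₁ y₂ m hm1) hsmall
        have := hδ hd
        rw [Real.dist_eq] at this
        have := abs_le.mp this.le
        linarith [this.1]
      linarith
    have hInt : a m ≤ b m + ε / 2 := by
      calc a m ≤ ∫ x, (T m x + ε / 2) ∂μ :=
            integral_mono (hIntS m) ((hIntT m).add (integrable_const _)) hpt
        _ = b m + ε / 2 := by
            rw [integral_add (hIntT m) (integrable_const _)]
            simp
            rfl
    rw [Real.dist_eq, sub_zero, abs_of_nonneg (hab_nonneg m)]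
    linarith
  have hbL : Tendsto b atTop (nhds L) := by
    have := haL.sub hdiff
    simpa using this
  exact ⟨L, haL, hbL⟩
end
end

section
/- Let C > 0, ρ ∈ (0,1), let φ : I×I → ℝ be continuous, and let ε > 0. Then there exists m₀ ≥ 1, depending only on ε, C, ρ and φ, such that for EVERY skew product P on I×I over a Borel map f : I → I with (C,ρ)-contracting fibers, every f-invariant Borel probability measure μ̄ on I for which the functions (φ∘P^m)⁺ are Borel measurable, and all integers m₂ ≥ m₁ ≥ m₀, one has | ∫ (φ∘P^{m₂})⁺ dμ̄ − ∫ (φ∘P^{m₁})⁺ dμ̄ | ≤ ε. -/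
open MeasureTheory Set Filter Topology

noncomputable section

/-- Given `C > 0`, `ρ ∈ (0,1)`, a continuous `φ : I×I → ℝ` and `ε > 0`,
there is `m₀ ≥ 1`, depending only on `ε, C, ρ, φ`, such that for every skew product `P` over
`f` with `(C,ρ)`-contracting fibers, every `f`-invariant Borel probability measure `μ̄`, and
all `m₂ ≥ m₁ ≥ m₀`, the integrals `∫ (φ∘P^{m_i})⁺ dμ̄` differ by at most `ε`. -/
theorem uniform_cauchy_sup_integrals
    (C ρ : ℝ) (hC : 0 < C) (hρ₀ : 0 < ρ) (hρ₁ : ρ < 1)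
    (φ : Sq → ℝ) (hφ : Continuous φ) (ε : ℝ) (hε : 0 < ε) :
    ∃ m₀ : ℕ, 1 ≤ m₀ ∧
      ∀ (f : Iv → Iv) (g : Sq → Iv) (P : Sq → Sq),
        Measurable f → Measurable g → Measurable P →
        (∀ p : Sq, P p = (f p.1, g p)) →
        (∀ (x y₁ y₂ : Iv) (m : ℕ), 1 ≤ m →
          dist (P^[m] (x, y₁)) (P^[m] (x, y₂)) ≤ C * ρ ^ m) →
        ∀ μ : Measure Iv, IsProbabilityMeasure μ → Measure.map f μ = μ →
          (∀ m : ℕ, Measurable fun x : Iv => ⨆ y : Iv, φ (P^[m] (x, y))) →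
          ∀ m₁ m₂ : ℕ, m₀ ≤ m₁ → m₁ ≤ m₂ →
            |∫ x, (⨆ y : Iv, φ (P^[m₂] (x, y))) ∂μ -
              ∫ x, (⨆ y : Iv, φ (P^[m₁] (x, y))) ∂μ| ≤ ε := by
  -- global bound on φ
  obtain ⟨M, hM⟩ : ∃ M : ℝ, ∀ p : Sq, |φ p| ≤ M := by
    obtain ⟨M, hM⟩ := (isCompact_range hφ).isBounded.exists_norm_le
    exact ⟨M, fun p => hM _ (mem_range_self p)⟩
  -- uniform continuity
  have hUC : UniformContinuous φ := CompactSpace.uniformContinuous_of_continuous hφ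
  obtain ⟨δ, hδ0, hδ⟩ := Metric.uniformContinuous_iff.mp hUC ε hε
  -- choose m₀
  have htend : Tendsto (fun n : ℕ => C * ρ ^ n) atTop (𝓝 0) := by
    have := tendsto_pow_atTop_nhds_zero_of_lt_one hρ₀.le hρ₁
    simpa using this.const_mul C
  obtain ⟨N, hN⟩ := (eventually_atTop.mp (htend.eventually (gt_mem_nhds hδ0)))
  refine ⟨max N 1, le_max_right _ _, ?_⟩
  intro f g P hf hg hPmeas hP hcontr μ hprob hinv hmeas m₁ m₂ hm₁ h12
  have hm₁1 : 1 ≤ m₁ := le_trans (le_max_right N 1) hm₁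
  have hm₁N : N ≤ m₁ := le_trans (le_max_left N 1) hm₁
  set k := m₂ - m₁ with hk
  have hm₂eq : m₂ = m₁ + k := by omega
  -- first coordinate of iterates
  have hfst : ∀ (m : ℕ) (x y : Iv), (P^[m] (x, y)).1 = f^[m] x := by
    intro m
    induction m with
    | zero => intro x y; simp
    | succ n ih =>
      intro x y
      rw [Function.iterate_succ_apply, hP (x, y)]
      simpa [Function.iterate_succ_apply] using ih (f x) (g (x, y))
  -- bddAbove of ranges
  have hbdd : ∀ (m : ℕ) (x : Iv), BddAbove (range fun y : Iv => φ (P^[m] (x, y))) := by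
    intro m x
    refine ⟨M, ?_⟩
    rintro _ ⟨y, rfl⟩
    exact (abs_le.mp (hM _)).2
  have y₀ : Iv := ⟨0, by norm_num⟩
  -- bound on sup functions
  have hsupbd : ∀ (m : ℕ) (x : Iv), |⨆ y : Iv, φ (P^[m] (x, y))| ≤ M := by
    intro m x
    rw [abs_le]
    constructor
    · exact le_trans (abs_le.mp (hM _)).1 (le_ciSup (hbdd m x) y₀)
    · exact ciSup_le fun y => (abs_le.mp (hM _)).2
  -- integrability
  have hint : ∀ m : ℕ, Integrable (fun x : Iv => ⨆ y : Iv, φ (P^[m] (x, y))) μ := by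
    intro m
    refine (integrable_const M).mono' (hmeas m).aestronglyMeasurable ?_
    exact ae_of_all _ fun x => by simpa [Real.norm_eq_abs] using hsupbd m x
  -- invariance under iterates
  have hmap : ∀ j : ℕ, Measure.map (f^[j]) μ = μ := by
    intro j
    induction j with
    | zero => simp
    | succ n ih =>
      rw [Function.iterate_succ']
      rw [← Measure.map_map hf (hf.iterate n), ih, hinv]
  -- integral of composed function
  have hcompint : Integrable (fun x : Iv => ⨆ y : Iv, φ (P^[m₁] (f^[k] x, y))) μ := by
    refine (integrable_const M).mono' ((hmeas m₁).comp (hf.iterate k)).aestronglyMeasurable ?_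
    exact ae_of_all _ fun x => by simpa [Real.norm_eq_abs] using hsupbd m₁ (f^[k] x)
  have hinteq : ∫ x, (⨆ y : Iv, φ (P^[m₁] (f^[k] x, y))) ∂μ
      = ∫ x, (⨆ y : Iv, φ (P^[m₁] (x, y))) ∂μ := by
    conv_rhs => rw [← hmap k]
    rw [integral_map (hf.iterate k).aemeasurable]
    rw [hmap k]
    exact (hmeas m₁).aestronglyMeasurable
  -- key pointwise estimates
  have hle : ∀ x : Iv, (⨆ y : Iv, φ (P^[m₂] (x, y))) ≤ ⨆ y : Iv, φ (P^[m₁] (f^[k] x, y)) := by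
    intro x
    refine ciSup_le fun y => ?_
    have h1 : P^[m₂] (x, y) = P^[m₁] (f^[k] x, (P^[k] (x, y)).2) := by
      rw [hm₂eq, Function.iterate_add_apply, ← hfst k x y]
    rw [h1]
    exact le_ciSup (hbdd m₁ (f^[k] x)) ((P^[k] (x, y)).2)
  have hge : ∀ x : Iv, (⨆ y : Iv, φ (P^[m₁] (f^[k] x, y)))
      ≤ (⨆ y : Iv, φ (P^[m₂] (x, y))) + ε := by
    intro x
    refine ciSup_le fun y' => ?_
    set z := (P^[k] (x, y₀)).2 with hz
    have hd : dist (P^[m₁] (f^[k] x, y')) (P^[m₁] (f^[k] x, z)) ≤ C * ρ ^ m₁ :=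
      hcontr _ _ _ m₁ hm₁1
    have hδd : dist (φ (P^[m₁] (f^[k] x, y'))) (φ (P^[m₁] (f^[k] x, z))) < ε :=
      hδ (lt_of_le_of_lt hd (hN m₁ hm₁N))
    have heq : P^[m₁] (f^[k] x, z) = P^[m₂] (x, y₀) := by
      rw [hm₂eq, Function.iterate_add_apply, ← hfst k x y₀]
    have h2 : φ (P^[m₂] (x, y₀)) ≤ ⨆ y : Iv, φ (P^[m₂] (x, y)) :=
      le_ciSup (hbdd m₂ x) y₀
    rw [Real.dist_eq, abs_lt] at hδd
    rw [heq] at hδd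
    linarith [hδd.2]
  -- conclude via integrals
  have hA : ∫ x, (⨆ y : Iv, φ (P^[m₂] (x, y))) ∂μ
      ≤ ∫ x, (⨆ y : Iv, φ (P^[m₁] (f^[k] x, y))) ∂μ :=
    integral_mono (hint m₂) hcompint hle
  have hB : ∫ x, (⨆ y : Iv, φ (P^[m₁] (f^[k] x, y))) ∂μ
      ≤ (∫ x, (⨆ y : Iv, φ (P^[m₂] (x, y))) ∂μ) + ε := by
    have := integral_mono hcompint ((hint m₂).add (integrable_const ε)) hge
    simpa [integral_add (hint m₂) (integrable_const ε), measure_univ] using this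
  rw [← hinteq, abs_le]
  constructor <;> linarith
end
end

section
/- Let C > 0 and ρ ∈ (0,1). For each n ≥ 1, let P_n be a skew product on I×I over a Borel map f_n : I → I with (C,ρ)-contracting fibers, and let μ̄_n be an f_n-invariant Borel probability measure on I; likewise let P be a skew product over f with (C,ρ)-contracting fibers and μ̄ an f-invariant Borel probability measure. Let φ : I×I → ℝ be continuous, and assume all the functions (φ∘P_n^m)⁺ and (φ∘P^m)⁺ are Borel measurable. Suppose that for each fixed m ≥ 0, ∫ (φ∘P_n^m)⁺ dμ̄_n → ∫ (φ∘P^m)⁺ dμ̄ as n → ∞. Then for each n the limit L_n := lim_{m→∞} ∫ (φ∘P_n^m)⁺ dμ̄_n exists, the limit L := lim_{m→∞} ∫ (φ∘P^m)⁺ dμ̄ exists, and L_n → L as n → ∞. -/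
open MeasureTheory Set Filter Topology

noncomputable section

lemma iter_fst (f : Iv → Iv) (g : Sq → Iv) (P : Sq → Sq)
    (hskew : ∀ p : Sq, P p = (f p.1, g p)) :
    ∀ (k : ℕ) (p : Sq), (P^[k] p).1 = f^[k] p.1 := by
  intro k
  induction k with
  | zero => intro p; simp
  | succ k ih =>
    intro p
    rw [Function.iterate_succ_apply, Function.iterate_succ_apply, ih, hskew]

lemma sup_diff_bound
    (C ρ : ℝ)
    (f : Iv → Iv) (g : Sq → Iv) (P : Sq → Sq)
    (hfmeas : Measurable f)
    (hskew : ∀ p : Sq, P p = (f p.1, g p))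
    (hcontr : ∀ (x y₁ y₂ : Iv) (m : ℕ), 1 ≤ m →
      dist (P^[m] (x, y₁)) (P^[m] (x, y₂)) ≤ C * ρ ^ m)
    (μ : Measure Iv) [IsProbabilityMeasure μ] (hinv : Measure.map f μ = μ)
    (φ : Sq → ℝ) (hφ : Continuous φ)
    (hmsup : ∀ m : ℕ, Measurable fun x : Iv => ⨆ y : Iv, φ (P^[m] (x, y)))
    (ε δ : ℝ) (hε : 0 < ε) (hδ : ∀ p q : Sq, dist p q < δ → |φ p - φ q| ≤ ε)
    (m k : ℕ) (hm : 1 ≤ m) (hδm : C * ρ ^ m < δ) :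
    |(∫ x, (⨆ y : Iv, φ (P^[m + k] (x, y))) ∂μ) -
      ∫ x, (⨆ y : Iv, φ (P^[m] (x, y))) ∂μ| ≤ ε := by
  obtain ⟨B, hB⟩ : ∃ B, ∀ p, |φ p| ≤ B := by
    obtain ⟨B, hB⟩ := (isCompact_range (hφ.norm)).bddAbove
    exact ⟨B, fun p => hB ⟨p, rfl⟩⟩
  set ψ : ℕ → Iv → ℝ := fun s x => ⨆ y : Iv, φ (P^[s] (x, y)) with hψ
  have hbdd : ∀ (s : ℕ) (x : Iv), BddAbove (Set.range fun y : Iv => φ (P^[s] (x, y))) := by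
    intro s x
    exact ⟨B, fun r ⟨y, hy⟩ => hy ▸ (abs_le.mp (hB _)).2⟩
  have hψB : ∀ s x, |ψ s x| ≤ B := by
    intro s x
    rw [abs_le]
    constructor
    · exact le_trans (abs_le.mp (hB (P^[s] (x, Classical.arbitrary Iv)))).1
        (le_ciSup (hbdd s x) (Classical.arbitrary Iv))
    · exact ciSup_le fun y => (abs_le.mp (hB _)).2
  have hfst := iter_fst f g P hskew
  -- pointwise (i)
  have hpt1 : ∀ x : Iv, ψ (m + k) x ≤ ψ m (f^[k] x) := by
    intro x
    apply ciSup_le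
    intro y
    rw [Function.iterate_add_apply]
    have hq : P^[k] (x, y) = (f^[k] x, (P^[k] (x, y)).2) := by
      ext
      · exact congrArg Subtype.val (hfst k (x, y))
      · rfl
    rw [hq]
    exact le_ciSup (hbdd m _) _
  -- pointwise (ii)
  have hpt2 : ∀ x : Iv, ψ m (f^[k] x) ≤ ψ (m + k) x + ε := by
    intro x
    apply ciSup_le
    intro z
    set y₀ := Classical.arbitrary Iv
    have hq : (f^[k] x, (P^[k] (x, y₀)).2) = P^[k] (x, y₀) := by
      ext
      · exact (congrArg Subtype.val (hfst k (x, y₀))).symm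
      · rfl
    have hd : dist (P^[m] (f^[k] x, z)) (P^[m] (f^[k] x, (P^[k] (x, y₀)).2)) < δ :=
      lt_of_le_of_lt (hcontr _ _ _ m hm) hδm
    have h1 : φ (P^[m] (f^[k] x, z)) ≤ φ (P^[m] (f^[k] x, (P^[k] (x, y₀)).2)) + ε := by
      have := (abs_le.mp (hδ _ _ hd)).2
      linarith [this]
    refine h1.trans ?_
    rw [hq, ← Function.iterate_add_apply]
    exact add_le_add_left (le_ciSup (hbdd (m + k) x) y₀) ε
  -- measure invariance under iterate
  have hmapk : Measure.map (f^[k]) μ = μ := by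
    clear hpt1 hpt2
    induction k with
    | zero => simp
    | succ k ih =>
      rw [Function.iterate_succ', ← Measure.map_map hfmeas (hfmeas.iterate k), ih, hinv]
  have hint : ∀ s, Integrable (ψ s) μ := by
    intro s
    refine ⟨(hmsup s).aestronglyMeasurable, ?_⟩
    exact HasFiniteIntegral.of_bounded (C := B) (ae_of_all _ fun x => hψB s x)
  have hintc : Integrable (fun x => ψ m (f^[k] x)) μ := by
    refine ⟨((hmsup m).comp (hfmeas.iterate k)).aestronglyMeasurable, ?_⟩
    exact HasFiniteIntegral.of_bounded (C := B) (ae_of_all _ fun x => hψB m _)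
  have heq : ∫ x, ψ m (f^[k] x) ∂μ = ∫ x, ψ m x ∂μ := by
    conv_rhs => rw [← hmapk]
    rw [integral_map (hfmeas.iterate k).aemeasurable (hmsup m).aestronglyMeasurable]
  have h1 : ∫ x, ψ (m + k) x ∂μ ≤ ∫ x, ψ m x ∂μ := by
    rw [← heq]
    exact integral_mono (hint (m + k)) hintc hpt1
  have h2 : ∫ x, ψ m x ∂μ ≤ (∫ x, ψ (m + k) x ∂μ) + ε := by
    rw [← heq]
    calc ∫ x, ψ m (f^[k] x) ∂μ ≤ ∫ x, (ψ (m + k) x + ε) ∂μ :=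
          integral_mono hintc ((hint (m + k)).add (integrable_const ε)) hpt2
      _ = (∫ x, ψ (m + k) x ∂μ) + ε := by
          rw [integral_add (hint (m + k)) (integrable_const ε), integral_const]
          simp
  rw [abs_sub_le_iff]
  constructor <;> linarith

/-- Interchange of limits: for skew products `P_n` (over `f_n`, with
`f_n`-invariant measures `μ̄_n`) and `P` (over `f`, with `μ̄`), all with `(C,ρ)`-contracting
fibers, if for each fixed `m` one has `∫ (φ∘P_n^m)⁺ dμ̄_n → ∫ (φ∘P^m)⁺ dμ̄` as `n → ∞`, then
the limits `L_n = lim_m ∫ (φ∘P_n^m)⁺ dμ̄_n` and `L = lim_m ∫ (φ∘P^m)⁺ dμ̄` exist and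
`L_n → L`. -/
theorem limits_interchange_sup_integrals
    (C ρ : ℝ) (hC : 0 < C) (hρ₀ : 0 < ρ) (hρ₁ : ρ < 1)
    (fn : ℕ → Iv → Iv) (gn : ℕ → Sq → Iv) (Pn : ℕ → Sq → Sq)
    (hfnmeas : ∀ n, Measurable (fn n)) (hgnmeas : ∀ n, Measurable (gn n))
    (hPnmeas : ∀ n, Measurable (Pn n))
    (hskewn : ∀ n (p : Sq), Pn n p = (fn n p.1, gn n p))
    (hcontrn : ∀ n (x y₁ y₂ : Iv) (m : ℕ), 1 ≤ m →
      dist ((Pn n)^[m] (x, y₁)) ((Pn n)^[m] (x, y₂)) ≤ C * ρ ^ m)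
    (μn : ℕ → Measure Iv) (hμnprob : ∀ n, IsProbabilityMeasure (μn n))
    (hμninv : ∀ n, Measure.map (fn n) (μn n) = μn n)
    (f : Iv → Iv) (g : Sq → Iv) (P : Sq → Sq)
    (hfmeas : Measurable f) (hgmeas : Measurable g) (hPmeas : Measurable P)
    (hskew : ∀ p : Sq, P p = (f p.1, g p))
    (hcontr : ∀ (x y₁ y₂ : Iv) (m : ℕ), 1 ≤ m →
      dist (P^[m] (x, y₁)) (P^[m] (x, y₂)) ≤ C * ρ ^ m)
    (μ : Measure Iv) [IsProbabilityMeasure μ] (hinv : Measure.map f μ = μ)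
    (φ : Sq → ℝ) (hφ : Continuous φ)
    (hmsupn : ∀ n (m : ℕ), Measurable fun x : Iv => ⨆ y : Iv, φ ((Pn n)^[m] (x, y)))
    (hmsup : ∀ m : ℕ, Measurable fun x : Iv => ⨆ y : Iv, φ (P^[m] (x, y)))
    (hconv : ∀ m : ℕ,
      Tendsto (fun n : ℕ => ∫ x, (⨆ y : Iv, φ ((Pn n)^[m] (x, y))) ∂μn n) atTop
        (nhds (∫ x, (⨆ y : Iv, φ (P^[m] (x, y))) ∂μ))) :
    ∃ (Ln : ℕ → ℝ) (L : ℝ),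
      (∀ n, Tendsto (fun m : ℕ => ∫ x, (⨆ y : Iv, φ ((Pn n)^[m] (x, y))) ∂μn n) atTop
        (nhds (Ln n))) ∧
      Tendsto (fun m : ℕ => ∫ x, (⨆ y : Iv, φ (P^[m] (x, y))) ∂μ) atTop (nhds L) ∧
      Tendsto Ln atTop (nhds L) := by
  set a : ℕ → ℝ := fun m => ∫ x, (⨆ y : Iv, φ (P^[m] (x, y))) ∂μ with ha
  set an : ℕ → ℕ → ℝ := fun n m => ∫ x, (⨆ y : Iv, φ ((Pn n)^[m] (x, y))) ∂μn n with han
  have huc := Metric.uniformContinuous_iff.mp (CompactSpace.uniformContinuous_of_continuous hφ)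
  -- key uniform estimate
  have key : ∀ ε : ℝ, 0 < ε → ∃ m₀ : ℕ, 1 ≤ m₀ ∧
      (∀ n, ∀ m, m₀ ≤ m → ∀ k, |an n (m + k) - an n m| ≤ ε) ∧
      (∀ m, m₀ ≤ m → ∀ k, |a (m + k) - a m| ≤ ε) := by
    intro ε hε
    obtain ⟨δ, hδ0, hδ⟩ := huc ε hε
    have hδ' : ∀ p q : Sq, dist p q < δ → |φ p - φ q| ≤ ε := by
      intro p q h
      rw [← Real.dist_eq]
      exact (hδ h).le
    have htend : Tendsto (fun m : ℕ => C * ρ ^ m) atTop (nhds 0) := by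
      simpa using (tendsto_pow_atTop_nhds_zero_of_lt_one hρ₀.le hρ₁).const_mul C
    obtain ⟨m₁, hm₁⟩ := (htend.eventually (gt_mem_nhds hδ0)).exists_forall_of_atTop
    refine ⟨max m₁ 1, le_max_right _ _, ?_, ?_⟩
    · intro n m hm k
      haveI := hμnprob n
      exact sup_diff_bound C ρ (fn n) (gn n) (Pn n) (hfnmeas n) (hskewn n) (hcontrn n)
        (μn n) (hμninv n) φ hφ (hmsupn n) ε δ hε hδ' m k
        (le_trans (le_max_right _ _) hm) (hm₁ m (le_trans (le_max_left _ _) hm))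
    · intro m hm k
      exact sup_diff_bound C ρ f g P hfmeas hskew hcontr μ hinv φ hφ hmsup ε δ hε hδ' m k
        (le_trans (le_max_right _ _) hm) (hm₁ m (le_trans (le_max_left _ _) hm))
  -- Cauchy, hence convergent
  have hcauchy : ∀ (u : ℕ → ℝ), (∀ ε : ℝ, 0 < ε → ∃ m₀ : ℕ, ∀ m, m₀ ≤ m → ∀ k,
      |u (m + k) - u m| ≤ ε) → CauchySeq u := by
    intro u hu
    rw [Metric.cauchySeq_iff']
    intro ε hε
    obtain ⟨m₀, hm₀⟩ := hu (ε / 2) (by linarith)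
    refine ⟨m₀, fun n hn => ?_⟩
    have : n = m₀ + (n - m₀) := by omega
    rw [Real.dist_eq, this]
    exact lt_of_le_of_lt (hm₀ m₀ le_rfl _) (by linarith)
  obtain ⟨L, hL⟩ := cauchySeq_tendsto_of_complete
    (hcauchy a (fun ε hε => (key ε hε).imp (fun m₀ h => h.2.2)))
  have hLn' : ∀ n, ∃ l, Tendsto (an n) atTop (nhds l) := fun n =>
    cauchySeq_tendsto_of_complete
      (hcauchy (an n) (fun ε hε => (key ε hε).imp (fun m₀ h => h.2.1 n)))
  choose Ln hLn using hLn'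
  refine ⟨Ln, L, hLn, hL, ?_⟩
  -- quantitative bound to limit
  have hlimbd : ∀ (u : ℕ → ℝ) (l : ℝ), Tendsto u atTop (nhds l) →
      ∀ (ε : ℝ) (m : ℕ), (∀ k, |u (m + k) - u m| ≤ ε) → |l - u m| ≤ ε := by
    intro u l hl ε m hk
    have h1 : Tendsto (fun k => |u (m + k) - u m|) atTop (nhds (|l - u m|)) := by
      have : Tendsto (fun k => u (m + k)) atTop (nhds l) := by
        have := hl.comp (tendsto_add_atTop_nat m)
        simpa [Function.comp_def, Nat.add_comm] using this
      exact ((this.sub_const (u m)).abs)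
    exact le_of_tendsto h1 (Eventually.of_forall hk)
  rw [Metric.tendsto_atTop]
  intro ε hε
  obtain ⟨m₀, hm₀1, hkn, hk⟩ := key (ε / 4) (by linarith)
  have hA : |L - a m₀| ≤ ε / 4 := hlimbd a L hL _ m₀ (hk m₀ le_rfl)
  have hAn : ∀ n, |Ln n - an n m₀| ≤ ε / 4 := fun n =>
    hlimbd (an n) (Ln n) (hLn n) _ m₀ (hkn n m₀ le_rfl)
  obtain ⟨N, hN⟩ := (Metric.tendsto_atTop.mp (hconv m₀)) (ε / 4) (by linarith)
  refine ⟨N, fun n hn => ?_⟩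
  have h2 := hN n hn
  rw [Real.dist_eq] at h2 ⊢
  have := hAn n
  calc |Ln n - L| ≤ |Ln n - an n m₀| + |an n m₀ - a m₀| + |a m₀ - L| := by
        have := abs_sub_le (Ln n) (an n m₀) L
        have := abs_sub_le (an n m₀) (a m₀) L
        linarith [abs_sub_le (Ln n) (an n m₀) L, abs_sub_le (an n m₀) (a m₀) L]
    _ < ε := by
        rw [abs_sub_comm (a m₀) L]
        linarith [hAn n, h2, hA]
end
end
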